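/- Max-min margin over the unit sphere for an orthonormal head: let W ∈ ℝ^{K×d} (K ≥ 2, d ≥ K) have orthonormal rows w_1,…,w_K. For any unit vector z ∈ ℝ^d and any class y, the minimal margin min_{c≠y} (⟨w_y, z⟩ − ⟨w_c, z⟩) is at most √(K/(K−1)), and this bound is attained by z* = Wᵀ(e_y − (1/K)𝟙)/√(1 − 1/K), for which every margin ⟨w_y, z*⟩ − ⟨w_c, z*⟩ (c ≠ y) equals √(K/(K−1)). -/

import Mathlib

open Matrix in
/-- Max-min margin over the unit sphere for an orthonormal head: for W with
orthonormal rows (W Wᵀ = I), any unit vector z and class y, the minimal margin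
min_{c ≠ y} (⟨w_y, z⟩ − ⟨w_c, z⟩) is at most √(K/(K−1)); the bound is attained
by z* = Wᵀ(e_y − (1/K)𝟙)/√(1 − 1/K), for which every margin equals √(K/(K−1)). -/
theorem max_min_margin_orthonormal_head (K d : ℕ) (hK : 2 ≤ K) (hd : K ≤ d)
    (W : Matrix (Fin K) (Fin d) ℝ) (hW : W * Wᵀ = 1) (y : Fin K) :
    (∀ z : Fin d → ℝ, ∑ j, (z j) ^ 2 = 1 →
      ∃ c : Fin K, c ≠ y ∧
        (W *ᵥ z) y - (W *ᵥ z) c ≤ Real.sqrt ((K : ℝ) / ((K : ℝ) - 1))) ∧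
    (∀ zstar : Fin d → ℝ,
      zstar = (Real.sqrt (1 - 1 / (K : ℝ)))⁻¹ •
        (Wᵀ *ᵥ (fun k => (if k = y then (1 : ℝ) else 0) - 1 / (K : ℝ))) →
      (∑ j, (zstar j) ^ 2 = 1) ∧
      ∀ c : Fin K, c ≠ y →
        (W *ᵥ zstar) y - (W *ᵥ zstar) c = Real.sqrt ((K : ℝ) / ((K : ℝ) - 1))) := by
  have hK2 : (2:ℝ) ≤ (K:ℝ) := by exact_mod_cast hK
  have hK0 : (0:ℝ) < (K:ℝ) := by linarith
  have hK1 : (0:ℝ) < (K:ℝ) - 1 := by linarith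
  have hKne : (K:ℝ) ≠ 0 := ne_of_gt hK0
  -- orthonormal rows
  have hWo : ∀ i k : Fin K, ∑ j, W i j * W k j = (if i = k then (1:ℝ) else 0) := by
    intro i k
    have := congrFun (congrFun hW i) k
    simpa [Matrix.mul_apply, Matrix.one_apply] using this
  -- Wᵀ is an isometry
  have hA : ∀ u : Fin K → ℝ, ∑ j, ((Wᵀ *ᵥ u) j)^2 = ∑ k, (u k)^2 := by
    intro u
    simp only [Matrix.mulVec, Matrix.transpose_apply, dotProduct]
    calc ∑ j, (∑ k, W k j * u k)^2
        = ∑ j, ∑ k, ∑ l, (W k j * u k) * (W l j * u l) := by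
          simp [sq, Finset.sum_mul_sum]
      _ = ∑ k, ∑ l, (u k * u l) * ∑ j, W k j * W l j := by
          rw [Finset.sum_comm]
          refine Finset.sum_congr rfl fun k _ => ?_
          rw [Finset.sum_comm]
          refine Finset.sum_congr rfl fun l _ => ?_
          rw [Finset.mul_sum]
          exact Finset.sum_congr rfl fun j _ => by ring
      _ = ∑ k, (u k)^2 := by simp [hWo, ← sq]
  constructor
  · -- Part 1
    intro z hz
    set a := W *ᵥ z with ha
    -- Bessel: ∑ a² ≤ 1
    have hmid : ∑ j, z j * (Wᵀ *ᵥ a) j = ∑ c, (a c)^2 := by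
      simp only [Matrix.mulVec, Matrix.transpose_apply, dotProduct, Finset.mul_sum]
      rw [Finset.sum_comm]
      refine Finset.sum_congr rfl fun c _ => ?_
      have hac : a c = ∑ j, W c j * z j := by rw [ha]; rfl
      rw [sq, hac]
      calc ∑ x, z x * (W c x * ∑ j, W c j * z j)
          = ∑ x, (W c x * z x) * ∑ j, W c j * z j :=
            Finset.sum_congr rfl fun x _ => by ring
        _ = (∑ j, W c j * z j) * ∑ j, W c j * z j := by rw [← Finset.sum_mul]
    have hBessel : ∑ c, (a c)^2 ≤ 1 := by
      have h1 : ∑ j, (z j - (Wᵀ *ᵥ a) j)^2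
          = ∑ j, (z j)^2 - 2 * (∑ c, (a c)^2) + ∑ c, (a c)^2 := by
        have hexp : ∀ j, (z j - (Wᵀ *ᵥ a) j)^2
            = (z j)^2 - 2 * (z j * (Wᵀ *ᵥ a) j) + ((Wᵀ *ᵥ a) j)^2 := fun j => by ring
        rw [Finset.sum_congr rfl fun j _ => hexp j]
        rw [Finset.sum_add_distrib, Finset.sum_sub_distrib, ← Finset.mul_sum, hmid, hA]
      nlinarith [Finset.sum_nonneg (fun j (_ : j ∈ Finset.univ) =>
        sq_nonneg (z j - (Wᵀ *ᵥ a) j)), h1, hz]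
    -- Cauchy–Schwarz bound for the sum of margins
    set v : Fin K → ℝ := fun c => if c = y then (K:ℝ) - 1 else -1 with hv
    set s := Finset.univ.erase y with hs
    have hcard : (s.card : ℝ) = (K:ℝ) - 1 := by
      rw [hs, Finset.card_erase_of_mem (Finset.mem_univ y)]
      simp [Nat.cast_sub (le_of_lt (lt_of_lt_of_le one_lt_two hK))]
    have hS : ∑ c ∈ s, (a y - a c) = ∑ c, v c * a c := by
      rw [← Finset.sum_erase_add _ _ (Finset.mem_univ y), ← hs]
      have h1 : ∑ c ∈ s, (v c * a c) = ∑ c ∈ s, (- a c) := by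
        refine Finset.sum_congr rfl fun c hc => ?_
        have : c ≠ y := (Finset.mem_erase.1 (hs ▸ hc)).1
        simp [hv, this]
      rw [h1]
      rw [Finset.sum_sub_distrib, Finset.sum_const, Finset.sum_neg_distrib]
      have : v y = (K:ℝ) - 1 := by simp [hv]
      rw [this, nsmul_eq_mul, hcard]
      ring
    have hvsq : ∑ c, (v c)^2 = (K:ℝ) * ((K:ℝ) - 1) := by
      rw [← Finset.sum_erase_add _ _ (Finset.mem_univ y), ← hs]
      have h1 : ∑ c ∈ s, (v c)^2 = ∑ c ∈ s, 1 := by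
        refine Finset.sum_congr rfl fun c hc => ?_
        have : c ≠ y := (Finset.mem_erase.1 (hs ▸ hc)).1
        simp [hv, this]
      rw [h1, Finset.sum_const, nsmul_eq_mul, hcard]
      simp [hv]
      ring
    have hCS : (∑ c, v c * a c)^2 ≤ (K:ℝ) * ((K:ℝ) - 1) := by
      calc (∑ c, v c * a c)^2 ≤ (∑ c, (v c)^2) * (∑ c, (a c)^2) :=
            Finset.sum_mul_sq_le_sq_mul_sq _ _ _
        _ ≤ (K:ℝ) * ((K:ℝ) - 1) * 1 := by
            apply mul_le_mul (le_of_eq hvsq) hBessel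
              (Finset.sum_nonneg fun c _ => sq_nonneg _) (by nlinarith)
        _ = (K:ℝ) * ((K:ℝ) - 1) := mul_one _
    set M := Real.sqrt ((K:ℝ) / ((K:ℝ) - 1)) with hM
    have hMeq : ((K:ℝ) - 1) * M = Real.sqrt ((K:ℝ) * ((K:ℝ) - 1)) := by
      rw [hM, ← Real.sqrt_sq (le_of_lt hK1), ← Real.sqrt_mul (sq_nonneg _)]
      congr 1
      field_simp
      ring_nf
      rw [Real.sq_sqrt (by nlinarith)]
    have hsum_le : ∑ c ∈ s, (a y - a c) ≤ ((K:ℝ) - 1) * M := by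
      rw [hS, hMeq]
      calc ∑ c, v c * a c ≤ |∑ c, v c * a c| := le_abs_self _
        _ = Real.sqrt ((∑ c, v c * a c)^2) := (Real.sqrt_sq_eq_abs _).symm
        _ ≤ Real.sqrt ((K:ℝ) * ((K:ℝ) - 1)) := Real.sqrt_le_sqrt hCS
    have hsne : s.Nonempty := by
      rw [← Finset.card_pos]
      have : (0:ℝ) < (s.card : ℝ) := by rw [hcard]; linarith
      exact_mod_cast this
    have hconst : ∑ _c ∈ s, M = ((K:ℝ) - 1) * M := by
      rw [Finset.sum_const, nsmul_eq_mul, hcard]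
    have Hle : ∑ c ∈ s, (a y - a c) ≤ ∑ _c ∈ s, M := by rw [hconst]; exact hsum_le
    obtain ⟨c, hc, hcle⟩ :=
      Finset.exists_le_of_sum_le (f := fun c => a y - a c) (g := fun _ => M) hsne Hle
    exact ⟨c, (Finset.mem_erase.1 (hs ▸ hc)).1, hcle⟩
  · -- Part 2
    intro zstar hzs
    set u : Fin K → ℝ := fun k => (if k = y then (1:ℝ) else 0) - 1 / (K:ℝ) with hu
    set t := Real.sqrt (1 - 1 / (K:ℝ)) with ht
    have ht2 : t^2 = 1 - 1 / (K:ℝ) := Real.sq_sqrt (by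
      rw [sub_nonneg]; rw [div_le_one hK0]; linarith)
    have htpos : 0 < t := Real.sqrt_pos.2 (by
      rw [sub_pos, div_lt_one hK0]; linarith)
    have husq : ∑ k, (u k)^2 = 1 - 1 / (K:ℝ) := by
      have h1 : ∀ k : Fin K, (u k)^2 = (if k = y then (1 - 1/(K:ℝ))^2 else (1/(K:ℝ))^2) := by
        intro k
        by_cases h : k = y <;> simp [hu, h] <;> ring
      rw [Finset.sum_congr rfl fun k _ => h1 k]
      rw [← Finset.sum_erase_add _ _ (Finset.mem_univ y)]
      have h2 : ∑ k ∈ Finset.univ.erase y, (if k = y then (1 - 1/(K:ℝ))^2 else (1/(K:ℝ))^2)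
          = ∑ _k ∈ Finset.univ.erase y, (1/(K:ℝ))^2 := by
        refine Finset.sum_congr rfl fun k hk => ?_
        simp [(Finset.mem_erase.1 hk).1]
      have hcard : ((Finset.univ.erase y).card : ℝ) = (K:ℝ) - 1 := by
        rw [Finset.card_erase_of_mem (Finset.mem_univ y)]
        simp [Nat.cast_sub (le_of_lt (lt_of_lt_of_le one_lt_two hK))]
      rw [h2, Finset.sum_const, nsmul_eq_mul, hcard, if_pos rfl]
      field_simp
      ring
    have htne : t ≠ 0 := ne_of_gt htpos
    have hnorm : ∑ j, (zstar j)^2 = 1 := by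
      have h3 : ∑ j, (zstar j)^2 = (t⁻¹)^2 * ∑ j, ((Wᵀ *ᵥ u) j)^2 := by
        rw [hzs]
        simp [Pi.smul_apply, smul_eq_mul, mul_pow, Finset.mul_sum]
      rw [h3, hA, husq, ← ht2]
      field_simp
    refine ⟨hnorm, fun c hc => ?_⟩
    have hWz : W *ᵥ zstar = t⁻¹ • u := by
      rw [hzs, Matrix.mulVec_smul, Matrix.mulVec_mulVec, hW, Matrix.one_mulVec]
    have hdiff : (W *ᵥ zstar) y - (W *ᵥ zstar) c = t⁻¹ := by
      rw [hWz]
      simp [hu, Pi.smul_apply, smul_eq_mul, hc]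
      ring
    rw [hdiff, ht]
    have h4 : (1:ℝ) - 1/(K:ℝ) = ((K:ℝ) - 1)/(K:ℝ) := by field_simp
    rw [h4, ← Real.sqrt_inv, inv_div]
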